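/- Under the hypotheses of Lemma 3.2 (Lemma `NonConvex'): if at a point x₀ the Hessian D²η(∇u(x₀)) has eigenvalues γ₁ ≤ γ₂ ≤ ... ≤ γₙ with γ₂ > 0 and γ₁ ≥ -λγ₂ for λ = λ(n,m) sufficiently small, and m⁻¹I ≤ D²F ≤ mI at ∇u(x₀), then F_{ij}u_{jk}η_{kl}u_{li}(x₀) ≥ 0, where u solves F_{ij}(∇u)u_{ij} = 0. -/

import Mathlib

noncomputable def pd2 (n : ℕ) (f : (Fin n → ℝ) → ℝ) (x : Fin n → ℝ) (i j : Fin n) : ℝ :=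
  fderiv ℝ (fun y => fderiv ℝ f y (Pi.single i 1)) x (Pi.single j 1)

noncomputable def gradV (n : ℕ) (u : (Fin n → ℝ) → ℝ) (x : Fin n → ℝ) : Fin n → ℝ :=
  fun i => fderiv ℝ u x (Pi.single i 1)

open Finset
set_option maxHeartbeats 1000000


lemma abs_le_of_quad (n : ℕ) (m : ℝ) (hm : 0 < m) (A : Fin n → Fin n → ℝ)
    (hAsym : ∀ i j, A i j = A j i)
    (hellip : ∀ v : Fin n → ℝ,
        m⁻¹ * ∑ i, v i ^ 2 ≤ ∑ i, ∑ j, A i j * v i * v j ∧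
        ∑ i, ∑ j, A i j * v i * v j ≤ m * ∑ i, v i ^ 2) :
    ∀ i j, |A i j| ≤ m := by
  intro i j
  rcases eq_or_ne i j with rfl | hij
  · have h1 := hellip (fun k => if k = i then 1 else 0)
    have hq : ∑ k, ∑ l, A k l * (if k = i then (1:ℝ) else 0) * (if l = i then (1:ℝ) else 0)
        = A i i := by simp [mul_ite, ite_mul, Finset.sum_ite_eq']
    have hs : ∑ k : Fin n, ((if k = i then (1:ℝ) else 0))^2 = 1 := by
      simp [ite_pow, Finset.sum_ite_eq']
    simp only [hq, hs] at h1
    have : (0:ℝ) ≤ A i i := le_trans (by positivity) h1.1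
    rw [abs_of_nonneg this]; linarith [h1.2]
  · have hp := hellip (fun k => (if k = i then 1 else 0) + if k = j then 1 else 0)
    have hn := hellip (fun k => (if k = i then 1 else 0) - if k = j then 1 else 0)
    have hqp : ∑ k, ∑ l, A k l * ((if k = i then (1:ℝ) else 0) + if k = j then 1 else 0)
        * ((if l = i then (1:ℝ) else 0) + if l = j then 1 else 0)
        = A i i + A i j + A j i + A j j := by
      simp [mul_add, add_mul, Finset.sum_add_distrib, mul_ite, ite_mul, Finset.sum_ite_eq']
      ring
    have hqn : ∑ k, ∑ l, A k l * ((if k = i then (1:ℝ) else 0) - if k = j then 1 else 0)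
        * ((if l = i then (1:ℝ) else 0) - if l = j then 1 else 0)
        = A i i - A i j - A j i + A j j := by
      simp [mul_sub, sub_mul, Finset.sum_sub_distrib, mul_ite, ite_mul, Finset.sum_ite_eq']
      ring
    have hsp : ∑ k : Fin n, (((if k = i then (1:ℝ) else 0) + if k = j then 1 else 0))^2 = 2 := by
      simp [add_sq, mul_ite, ite_mul, Finset.sum_add_distrib, Finset.sum_ite_eq', Ne.symm hij]
      norm_num
    have hsn : ∑ k : Fin n, (((if k = i then (1:ℝ) else 0) - if k = j then 1 else 0))^2 = 2 := by
      simp [sub_sq, mul_ite, ite_mul, Finset.sum_add_distrib, Finset.sum_sub_distrib,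
        Finset.sum_ite_eq', Ne.symm hij]
      norm_num
    simp only [hqp, hsp] at hp
    simp only [hqn, hsn] at hn
    have h2 : (0:ℝ) ≤ m⁻¹ * 2 := by positivity
    rw [abs_le]
    have hsym := hAsym j i
    constructor <;> nlinarith [hp.1, hp.2, hn.1, hn.2]


lemma key_lemma (n : ℕ) (hn : 2 ≤ n) (m : ℝ) (hm : 0 < m)
    (A B : Fin n → Fin n → ℝ) (γ : Fin n → ℝ)
    (hBsym : ∀ i j, B i j = B j i)
    (hAbound : ∀ i j, |A i j| ≤ m)
    (heq : ∑ i, ∑ j, A i j * B i j = 0)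
    (hellip : ∀ v : Fin n → ℝ,
        m⁻¹ * ∑ i, v i ^ 2 ≤ ∑ i, ∑ j, A i j * v i * v j ∧
        ∑ i, ∑ j, A i j * v i * v j ≤ m * ∑ i, v i ^ 2)
    (hγ : Monotone γ)
    (hγ1 : 0 < γ ⟨1, Nat.lt_of_lt_of_le (by norm_num) hn⟩)
    (hγ0 : -(1/(m^2*(2*m^4*(n:ℝ)^2+1))) * γ ⟨1, Nat.lt_of_lt_of_le (by norm_num) hn⟩ ≤ γ ⟨0, Nat.lt_of_lt_of_le (by norm_num) hn⟩) :
    0 ≤ ∑ k, γ k * ∑ i, ∑ j, A i j * B i k * B j k := by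
  set z : Fin n := ⟨0, by omega⟩ with hz
  set o : Fin n := ⟨1, by omega⟩ with ho
  have hzv : (z : ℕ) = 0 := rfl
  have hov : (o : ℕ) = 1 := rfl
  set c : ℝ := 2*m^4*(n:ℝ)^2+1 with hc
  have hcpos : 0 < c := by positivity
  set lam : ℝ := 1/(m^2*c) with hlam
  set Q : Fin n → ℝ := fun k => ∑ i, ∑ j, A i j * B i k * B j k with hQdef
  set N : Fin n → ℝ := fun k => ∑ i, B i k ^ 2 with hNdef
  have hQ : ∀ k, m⁻¹ * N k ≤ Q k ∧ Q k ≤ m * N k := fun k => hellip (fun i => B i k)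
  have hNpos : ∀ k, 0 ≤ N k := fun k => Finset.sum_nonneg (fun i _ => sq_nonneg _)
  set T : ℝ := ∑ k ∈ univ.erase z, N k with hT
  have hTpos : 0 ≤ T := Finset.sum_nonneg (fun k _ => hNpos k)
  set s : Finset (Fin n × Fin n) := (univ ×ˢ univ).erase (z, z) with hs
  have hmem : ((z, z) : Fin n × Fin n) ∈ (univ ×ˢ univ : Finset (Fin n × Fin n)) := by simp
  have heq' : ∑ p ∈ (univ ×ˢ univ : Finset (Fin n × Fin n)), A p.1 p.2 * B p.1 p.2 = 0 := by
    rw [Finset.sum_product]; exact heq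
  have hsplit : A z z * B z z = -∑ p ∈ s, A p.1 p.2 * B p.1 p.2 := by
    have h := Finset.add_sum_erase (univ ×ˢ univ)
      (fun p : Fin n × Fin n => A p.1 p.2 * B p.1 p.2) hmem
    beta_reduce at h
    rw [heq'] at h
    rw [hs]
    linarith
  have hAzz : m⁻¹ ≤ A z z := by
    have h1 := hellip (fun k => if k = z then 1 else 0)
    have hq : ∑ k, ∑ l, A k l * (if k = z then (1:ℝ) else 0) * (if l = z then (1:ℝ) else 0)
        = A z z := by simp [mul_ite, ite_mul, Finset.sum_ite_eq']
    have hsq : ∑ k : Fin n, ((if k = z then (1:ℝ) else 0))^2 = 1 := by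
      simp [ite_pow, Finset.sum_ite_eq']
    simp only [hq, hsq, mul_one] at h1
    exact h1.1
  have hBzz : |B z z| ≤ m^2 * ∑ p ∈ s, |B p.1 p.2| := by
    have h1 : m⁻¹ * |B z z| ≤ m * ∑ p ∈ s, |B p.1 p.2| := by
      calc m⁻¹ * |B z z| ≤ A z z * |B z z| :=
            mul_le_mul_of_nonneg_right hAzz (abs_nonneg _)
        _ = |A z z * B z z| := by
            rw [abs_mul, abs_of_nonneg (le_trans (le_of_lt (inv_pos.2 hm)) hAzz)]
        _ = |∑ p ∈ s, A p.1 p.2 * B p.1 p.2| := by rw [hsplit, abs_neg]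
        _ ≤ ∑ p ∈ s, |A p.1 p.2 * B p.1 p.2| := Finset.abs_sum_le_sum_abs _ _
        _ ≤ ∑ p ∈ s, m * |B p.1 p.2| := by
            refine Finset.sum_le_sum fun p _ => ?_
            rw [abs_mul]
            exact mul_le_mul_of_nonneg_right (hAbound p.1 p.2) (abs_nonneg _)
        _ = m * ∑ p ∈ s, |B p.1 p.2| := by rw [Finset.mul_sum]
    have h2 : |B z z| = m * (m⁻¹ * |B z z|) := by field_simp
    rw [h2]
    calc m * (m⁻¹ * |B z z|) ≤ m * (m * ∑ p ∈ s, |B p.1 p.2|) :=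
          mul_le_mul_of_nonneg_left h1 hm.le
      _ = m^2 * ∑ p ∈ s, |B p.1 p.2| := by ring
  have hcard : (s.card : ℝ) ≤ (n:ℝ)^2 := by
    have h1 : s.card ≤ n * n := by
      calc s.card ≤ ((univ ×ˢ univ : Finset (Fin n × Fin n))).card :=
            Finset.card_le_card (by rw [hs]; exact Finset.erase_subset _ _)
        _ = n * n := by simp [Finset.card_univ]
    calc (s.card : ℝ) ≤ ((n * n : ℕ) : ℝ) := Nat.cast_le.2 h1
      _ = (n:ℝ)^2 := by push_cast; ring
  have hB2 : B z z ^ 2 ≤ m^4 * (n:ℝ)^2 * ∑ p ∈ s, B p.1 p.2 ^ 2 := by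
    have h1 : (∑ p ∈ s, |B p.1 p.2|)^2 ≤ s.card * ∑ p ∈ s, B p.1 p.2 ^ 2 := by
      have := sq_sum_le_card_mul_sum_sq (s := s) (f := fun p => |B p.1 p.2|)
      simpa [sq_abs] using this
    have h2 : B z z ^ 2 ≤ (m^2 * ∑ p ∈ s, |B p.1 p.2|)^2 := by
      rw [← sq_abs (B z z)]
      exact pow_le_pow_left₀ (abs_nonneg _) hBzz 2
    have h3 : 0 ≤ ∑ p ∈ s, B p.1 p.2 ^ 2 := Finset.sum_nonneg fun p _ => sq_nonneg _
    calc B z z ^ 2 ≤ (m^2 * ∑ p ∈ s, |B p.1 p.2|)^2 := h2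
      _ = m^4 * (∑ p ∈ s, |B p.1 p.2|)^2 := by ring
      _ ≤ m^4 * (s.card * ∑ p ∈ s, B p.1 p.2 ^ 2) :=
          mul_le_mul_of_nonneg_left h1 (by positivity)
      _ ≤ m^4 * ((n:ℝ)^2 * ∑ p ∈ s, B p.1 p.2 ^ 2) :=
          mul_le_mul_of_nonneg_left (mul_le_mul_of_nonneg_right hcard h3) (by positivity)
      _ = m^4 * (n:ℝ)^2 * ∑ p ∈ s, B p.1 p.2 ^ 2 := by ring
  have hNzB : N z - B z z ^ 2 = ∑ i ∈ univ.erase z, B i z ^ 2 := by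
    have h := Finset.add_sum_erase univ (fun i => B i z ^ 2) (Finset.mem_univ z)
    beta_reduce at h
    show (∑ i, B i z ^ 2) - B z z ^ 2 = _
    linarith
  have hoffz : ∑ i ∈ univ.erase z, B i z ^ 2 ≤ T := by
    refine Finset.sum_le_sum fun i _ => ?_
    rw [hBsym i z]
    exact Finset.single_le_sum (f := fun j => B j i ^ 2) (fun j _ => sq_nonneg _)
      (Finset.mem_univ z)
  have hsum_s : ∑ p ∈ s, B p.1 p.2 ^ 2 ≤ 2 * T := by
    have h1 : ∑ p ∈ (univ ×ˢ univ : Finset (Fin n × Fin n)), B p.1 p.2 ^ 2 = N z + T := by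
      rw [Finset.sum_product]
      have hcomm : ∑ i, ∑ j, B i j ^ 2 = ∑ j, ∑ i, B i j ^ 2 := Finset.sum_comm
      rw [hcomm]
      have h := Finset.add_sum_erase univ (fun j => ∑ i, B i j ^ 2) (Finset.mem_univ z)
      beta_reduce at h
      show _ = (∑ i, B i z ^ 2) + T
      rw [hT]
      linarith
    have h2 : B z z ^ 2 + ∑ p ∈ s, B p.1 p.2 ^ 2
        = ∑ p ∈ (univ ×ˢ univ : Finset (Fin n × Fin n)), B p.1 p.2 ^ 2 := by
      have h := Finset.add_sum_erase (univ ×ˢ univ)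
        (fun p : Fin n × Fin n => B p.1 p.2 ^ 2) hmem
      beta_reduce at h
      rw [hs]
      linarith
    linarith [hNzB, hoffz]
  have hNz : N z ≤ c * T := by
    have hmul := mul_le_mul_of_nonneg_left hsum_s (show (0:ℝ) ≤ m^4*(n:ℝ)^2 by positivity)
    rw [hc]
    nlinarith [hB2, hNzB, hoffz]
  have hlampos : 0 < lam := by rw [hlam]; positivity
  have hlamg : 0 < lam * γ o := mul_pos hlampos hγ1
  have hQz0 : 0 ≤ Q z := le_trans (by positivity) (hQ z).1
  rw [← Finset.add_sum_erase _ (fun k => γ k * Q k) (Finset.mem_univ z)]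
  beta_reduce
  have h1 : -(lam * γ o) * Q z ≤ γ z * Q z := by
    have := mul_le_mul_of_nonneg_right hγ0 hQz0
    calc -(lam * γ o) * Q z = -lam * γ o * Q z := by ring
      _ ≤ γ z * Q z := this
  have h2 : (-(lam * γ o)) * (m * N z) ≤ (-(lam * γ o)) * Q z :=
    mul_le_mul_of_nonpos_left (hQ z).2 (by linarith)
  have h3 : (-(lam * γ o)) * (m * (c * T)) ≤ (-(lam * γ o)) * (m * N z) :=
    mul_le_mul_of_nonpos_left (mul_le_mul_of_nonneg_left hNz hm.le)
      (by linarith)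
  have h4 : γ o * (m⁻¹ * T) ≤ ∑ k ∈ univ.erase z, γ k * Q k := by
    have hstep : ∀ k ∈ univ.erase z, γ o * (m⁻¹ * N k) ≤ γ k * Q k := by
      intro k hk
      have hkz : k ≠ z := Finset.ne_of_mem_erase hk
      have hkv : (k : ℕ) ≠ (z : ℕ) := fun h => hkz (Fin.ext h)
      have hko : o ≤ k := by rw [Fin.le_def]; omega
      have hγk : γ o ≤ γ k := hγ hko
      have hQk0 : 0 ≤ Q k := le_trans (by positivity) (hQ k).1
      calc γ o * (m⁻¹ * N k) ≤ γ o * Q k :=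
            mul_le_mul_of_nonneg_left (hQ k).1 hγ1.le
        _ ≤ γ k * Q k := mul_le_mul_of_nonneg_right hγk hQk0
    calc γ o * (m⁻¹ * T) = ∑ k ∈ univ.erase z, γ o * (m⁻¹ * N k) := by
          rw [hT, Finset.mul_sum, Finset.mul_sum]
      _ ≤ ∑ k ∈ univ.erase z, γ k * Q k := Finset.sum_le_sum hstep
  have hlameq : (-(lam * γ o)) * (m * (c * T)) = -(γ o * (m⁻¹ * T)) := by
    rw [hlam]
    field_simp
  clear_value z o c lam Q N T s
  linarith [h1, h2, h3, h4, hlameq.le, hlameq.ge]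

/-- Pointwise version of Lemma `NonConvex`: if `D²η(∇u(x₀))` is diagonal with eigenvalues
`γ₁ ≤ ⋯ ≤ γₙ`, `γ₂ > 0` and `γ₁ ≥ -λγ₂` for `λ = λ(n,m)` small, and `D²F` is elliptic at
`∇u(x₀)`, then `F_{ij}u_{jk}η_{kl}u_{li}(x₀) ≥ 0`. -/
theorem stmt7 (n : ℕ) (hn : 2 ≤ n) (m : ℝ) (hm : 0 < m) :
    ∃ lam > (0 : ℝ), ∀ (F η u : (Fin n → ℝ) → ℝ) (x₀ γ : Fin n → ℝ),
      (∀ i j, pd2 n u x₀ i j = pd2 n u x₀ j i) →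
      (∀ i j, pd2 n F (gradV n u x₀) i j = pd2 n F (gradV n u x₀) j i) →
      (∑ i, ∑ j, pd2 n F (gradV n u x₀) i j * pd2 n u x₀ i j = 0) →
      (∀ v : Fin n → ℝ,
        m⁻¹ * ∑ i, v i ^ 2 ≤ ∑ i, ∑ j, pd2 n F (gradV n u x₀) i j * v i * v j ∧
        ∑ i, ∑ j, pd2 n F (gradV n u x₀) i j * v i * v j ≤ m * ∑ i, v i ^ 2) →
      (∀ i j, pd2 n η (gradV n u x₀) i j = if i = j then γ i else 0) →
      Monotone γ →
      0 < γ ⟨1, by omega⟩ →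
      -lam * γ ⟨1, by omega⟩ ≤ γ ⟨0, by omega⟩ →
      0 ≤ ∑ i, ∑ j, ∑ k, ∑ l, pd2 n F (gradV n u x₀) i j * pd2 n u x₀ j k *
          pd2 n η (gradV n u x₀) k l * pd2 n u x₀ l i := by
  refine ⟨1/(m^2*(2*m^4*(n:ℝ)^2+1)), by positivity, ?_⟩
  intro F η u x₀ γ hBsym hAsym heq hellip hη hγ hγ1 hγ0
  set A : Fin n → Fin n → ℝ := fun i j => pd2 n F (gradV n u x₀) i j with hA
  set B : Fin n → Fin n → ℝ := fun i j => pd2 n u x₀ i j with hB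
  have hBsym' : ∀ i j, B i j = B j i := fun i j => hBsym i j
  have hrw : (∑ i, ∑ j, ∑ k, ∑ l, A i j * B j k * pd2 n η (gradV n u x₀) k l * B l i)
      = ∑ k, γ k * ∑ i, ∑ j, A i j * B i k * B j k := by
    calc (∑ i, ∑ j, ∑ k, ∑ l, A i j * B j k * pd2 n η (gradV n u x₀) k l * B l i)
        = ∑ i, ∑ j, ∑ k, A i j * B j k * γ k * B k i := by
          simp only [hη, mul_ite, ite_mul, mul_zero, zero_mul, Finset.sum_ite_eq,
            Finset.mem_univ, if_true]
      _ = ∑ i, ∑ k, ∑ j, A i j * B j k * γ k * B k i :=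
          Finset.sum_congr rfl fun i _ => Finset.sum_comm
      _ = ∑ k, ∑ i, ∑ j, A i j * B j k * γ k * B k i := Finset.sum_comm
      _ = ∑ k, γ k * ∑ i, ∑ j, A i j * B i k * B j k := by
          refine Finset.sum_congr rfl fun k _ => ?_
          rw [Finset.mul_sum]
          refine Finset.sum_congr rfl fun i _ => ?_
          rw [Finset.mul_sum]
          refine Finset.sum_congr rfl fun j _ => ?_
          rw [hBsym' k i]
          ring
  rw [hrw]
  exact key_lemma n hn m hm A B γ hBsym
    (abs_le_of_quad n m hm A hAsym hellip) heq hellip hγ hγ1 hγ0
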